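/- Let X be a smooth manifold, (K_j) and (L_j) increasing sequences of compact subsets of X with K_j ⊆ interior(K_{j+1}) and L_j ⊆ interior(L_{j+1}) for all j ≥ 0, and set M = ⋃ K_j, N = ⋃ L_j. Suppose there is a sequence of diffeotopies φ_{j,t} : X → X (smooth isotopies of diffeomorphisms with φ_{j,0} = id) such that (1) φ_{j,1}(K_j) = L_j for all j ≥ 0, (2) L_{j-1} ⊆ φ_{j,1}(K_{j-1}) for all j ≥ 1, and (3) φ_{j+1,t}(x) = φ_{j,t}(x) for all x ∈ K_{j-1}, t ∈ [0,1], j ≥ 1. Then Φ_t(x) := lim_{j→∞} φ_{j,t}(x) is well defined on M (the sequence is eventually constant at each point), gives a smooth isotopy of smooth embeddings Φ_t : M → X with Φ_0 the inclusion, and Φ_1(M) = N. -/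

import Mathlib

open Set Manifold

/-- If `K_j`, `L_j` are increasing sequences of compact sets in a smooth manifold `X`
(with `K_j ⊆ int K_{j+1}`, `L_j ⊆ int L_{j+1}`) and `φ_{j,t}` is a sequence of diffeotopies
with `φ_{j,1}(K_j) = L_j`, `L_{j-1} ⊆ φ_{j,1}(K_{j-1})` and `φ_{j+1,t} = φ_{j,t}` on `K_{j-1}`,
then `Φ_t = lim_j φ_{j,t}` is well defined (the sequence is eventually constant at each point
of `M = ⋃ K_j`), is a smooth isotopy of smooth embeddings of `M` into `X` with `Φ_0` the
inclusion, and `Φ_1(M) = N = ⋃ L_j`. -/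
theorem stmt1 {E H' : Type*} [NormedAddCommGroup E] [NormedSpace ℝ E] [TopologicalSpace H']
    (I : ModelWithCorners ℝ E H') (X : Type*) [TopologicalSpace X] [ChartedSpace H' X]
    [IsManifold I (⊤ : ℕ∞) X]
    (K L : ℕ → Set X)
    (hKcpt : ∀ j, IsCompact (K j)) (hLcpt : ∀ j, IsCompact (L j))
    (hKmono : ∀ j, K j ⊆ interior (K (j + 1)))
    (hLmono : ∀ j, L j ⊆ interior (L (j + 1)))
    (φ : ℕ → ℝ → X → X)
    (hφsmooth : ∀ j, ContMDiff ((𝓘(ℝ, ℝ)).prod I) I (⊤ : ℕ∞) (fun p : ℝ × X => φ j p.1 p.2))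
    (hφ0 : ∀ j, φ j 0 = id)
    (hφdiffeo : ∀ j t, ∃ g : X → X, ContMDiff I I (⊤ : ℕ∞) g ∧
      Function.LeftInverse g (φ j t) ∧ Function.RightInverse g (φ j t))
    (h1 : ∀ j, φ j 1 '' K j = L j)
    (h2 : ∀ j, L j ⊆ φ (j + 1) 1 '' K j)
    (h3 : ∀ j, ∀ x ∈ K j, ∀ t ∈ Icc (0 : ℝ) 1, φ (j + 2) t x = φ (j + 1) t x) :
    ∃ Φ : ℝ → X → X,
      (∀ x ∈ ⋃ j, K j, ∀ t ∈ Icc (0 : ℝ) 1, ∀ᶠ j in Filter.atTop, φ j t x = Φ t x) ∧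
      (∀ x ∈ ⋃ j, K j, Φ 0 x = x) ∧
      ContMDiffOn ((𝓘(ℝ, ℝ)).prod I) I (⊤ : ℕ∞) (fun p : ℝ × X => Φ p.1 p.2)
        ((Icc (0 : ℝ) 1) ×ˢ ⋃ j, K j) ∧
      (∀ t ∈ Icc (0 : ℝ) 1, Set.InjOn (Φ t) (⋃ j, K j)) ∧
      (∀ t ∈ Icc (0 : ℝ) 1,
        Topology.IsEmbedding fun x : (⋃ j, K j : Set X) => Φ t (x : X)) ∧
      Φ 1 '' (⋃ j, K j) = ⋃ j, L j := by
  classical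
  -- monotonicity of `K`
  have hKsub : Monotone K := monotone_nat_of_le_succ fun n => (hKmono n).trans interior_subset
  -- injectivity and open-image property of the diffeomorphisms `φ m t`
  have hinj : ∀ m t, Function.Injective (φ m t) := by
    intro m t
    obtain ⟨g, _, hgl, _⟩ := hφdiffeo m t
    exact hgl.injective
  have himg : ∀ m t (U : Set X), IsOpen U → IsOpen (φ m t '' U) := by
    intro m t U hU
    obtain ⟨g, hgsm, hgl, hgr⟩ := hφdiffeo m t
    have : φ m t '' U = g ⁻¹' U := by
      ext z
      constructor
      · rintro ⟨u, hu, rfl⟩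
        simpa [hgl u] using hu
      · intro hz
        exact ⟨g z, hz, hgr z⟩
    rw [this]
    exact hU.preimage hgsm.continuous
  -- stabilization lemma
  have lemA : ∀ (m j : ℕ), j + 1 ≤ m → ∀ x ∈ K j, ∀ t ∈ Icc (0 : ℝ) 1,
      φ m t x = φ (j + 1) t x := by
    intro m
    induction m with
    | zero => intro j h; omega
    | succ n ih =>
      intro j h x hx t ht
      rcases eq_or_lt_of_le h with he | hl
      · rw [← he]
      · obtain ⟨n', rfl⟩ : ∃ n', n = n' + 1 := ⟨n - 1, by omega⟩
        have hx' : x ∈ K n' := hKsub (by omega : j ≤ n') hx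
        have e : n' + 1 + 1 = n' + 2 := rfl
        rw [e, h3 n' x hx' t ht]
        exact ih j (by omega) x hx t ht
  set Φ : ℝ → X → X := fun t x => if h : ∃ j, x ∈ K j then φ (Nat.find h + 1) t x else x
    with hΦ
  have lemB : ∀ (j : ℕ) (x : X), x ∈ K j → ∀ t ∈ Icc (0 : ℝ) 1, Φ t x = φ (j + 1) t x := by
    intro j x hx t ht
    have hex : ∃ i, x ∈ K i := ⟨j, hx⟩
    have hfind : Nat.find hex ≤ j := Nat.find_min' hex hx
    rw [hΦ]
    simp only [dif_pos hex]
    exact (lemA (j + 1) (Nat.find hex) (by omega) x (Nat.find_spec hex) t ht).symm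
  -- smoothness
  have hsm : ContMDiffOn ((𝓘(ℝ, ℝ)).prod I) I (⊤ : ℕ∞) (fun p : ℝ × X => Φ p.1 p.2)
      ((Icc (0 : ℝ) 1) ×ˢ ⋃ j, K j) := by
    intro p hp
    obtain ⟨ht, hx⟩ := hp
    obtain ⟨j, hj⟩ := mem_iUnion.mp hx
    have hopen : IsOpen ((univ : Set ℝ) ×ˢ interior (K (j + 1))) :=
      isOpen_univ.prod isOpen_interior
    have hmem : p ∈ (univ : Set ℝ) ×ˢ interior (K (j + 1)) :=
      ⟨mem_univ _, hKmono j hj⟩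
    have heq : ∀ q ∈ ((univ : Set ℝ) ×ˢ interior (K (j + 1))) ∩
        ((Icc (0 : ℝ) 1) ×ˢ ⋃ i, K i), Φ q.1 q.2 = φ (j + 2) q.1 q.2 := by
      rintro ⟨s, y⟩ ⟨⟨-, hy⟩, ⟨hs, -⟩⟩
      exact lemB (j + 1) y (interior_subset hy) s hs
    refine ((hφsmooth (j + 2)).contMDiffAt.contMDiffWithinAt).congr_of_eventuallyEq ?_ ?_
    · exact Filter.eventuallyEq_of_mem
        (mem_nhdsWithin.mpr ⟨_, hopen, hmem, fun q hq => heq q hq⟩) (fun q hq => hq)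
    · exact heq p ⟨hmem, ⟨ht, hx⟩⟩
  -- injectivity of `Φ t`
  have hInj : ∀ t ∈ Icc (0 : ℝ) 1, Set.InjOn (Φ t) (⋃ j, K j) := by
    intro t ht x hx y hy hxy
    obtain ⟨i, hi⟩ := mem_iUnion.mp hx
    obtain ⟨j, hj⟩ := mem_iUnion.mp hy
    have hxi : x ∈ K (max i j) := hKsub (le_max_left i j) hi
    have hyj : y ∈ K (max i j) := hKsub (le_max_right i j) hj
    rw [lemB (max i j) x hxi t ht, lemB (max i j) y hyj t ht] at hxy
    exact hinj (max i j + 1) t hxy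
  refine ⟨Φ, ?_, ?_, hsm, hInj, ?_, ?_⟩
  · -- eventual constancy
    intro x hx t ht
    obtain ⟨j, hj⟩ := mem_iUnion.mp hx
    refine Filter.eventually_atTop.mpr ⟨j + 1, fun m hm => ?_⟩
    rw [lemA m j hm x hj t ht, ← lemB j x hj t ht]
  · -- `Φ 0 = id` on `M`
    intro x hx
    have hex : ∃ i, x ∈ K i := mem_iUnion.mp hx
    rw [hΦ]
    simp only [dif_pos hex, hφ0]
    rfl
  · -- embedding
    intro t ht
    have hcont : ContinuousOn (Φ t) (⋃ j, K j) := by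
      have h1' : ContinuousOn (fun p : ℝ × X => Φ p.1 p.2) ((Icc (0 : ℝ) 1) ×ˢ ⋃ j, K j) :=
        hsm.continuousOn
      have h2' : Continuous fun x : X => ((t, x) : ℝ × X) :=
        continuous_const.prodMk continuous_id
      exact h1'.comp h2'.continuousOn (fun x hx => ⟨ht, hx⟩)
    have hfc : Continuous fun x : (⋃ j, K j : Set X) => Φ t (x : X) :=
      continuousOn_iff_continuous_restrict.mp hcont
    rw [Topology.isEmbedding_iff]
    constructor
    · rw [Topology.isInducing_iff_nhds]
      intro a
      refine le_antisymm ((hfc.tendsto a).le_comap) ?_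
      intro W hW
      rw [Filter.mem_comap]
      obtain ⟨j, hj⟩ := mem_iUnion.mp a.2
      obtain ⟨U, hU, hUW⟩ := (mem_nhds_subtype _ a W).mp hW
      obtain ⟨U₀, hU₀U, hU₀open, haU₀⟩ := mem_nhds_iff.mp hU
      set U' : Set X := U₀ ∩ interior (K (j + 1)) with hU'
      have hU'open : IsOpen U' := hU₀open.inter isOpen_interior
      have haU' : (a : X) ∈ U' := ⟨haU₀, hKmono j hj⟩
      have haK : (a : X) ∈ K (j + 1) := interior_subset (hKmono j hj)
      refine ⟨φ (j + 2) t '' U', ?_, ?_⟩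
      · have : Φ t (a : X) = φ (j + 2) t (a : X) := lemB (j + 1) _ haK t ht
        exact (himg (j + 2) t U' hU'open).mem_nhds ⟨(a : X), haU', this.symm⟩
      · intro y hy
        obtain ⟨z, hz, hzy⟩ := hy
        obtain ⟨i, hi⟩ := mem_iUnion.mp y.2
        set n : ℕ := max (i + 1) (j + 2) with hn
        have e1 : φ n t (y : X) = Φ t (y : X) := by
          rw [lemB i _ hi t ht]
          exact lemA n i (le_max_left _ _) _ hi t ht
        have e2 : φ n t z = φ (j + 2) t z :=
          lemA n (j + 1) (le_max_right _ _) z (interior_subset hz.2) t ht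
        have : φ n t (y : X) = φ n t z := by
          rw [e1, e2]; exact hzy.symm
        have hyz : (y : X) = z := hinj n t this
        apply hUW
        show (y : X) ∈ U
        rw [hyz]
        exact hU₀U hz.1
    · intro a b hab
      exact Subtype.ext (hInj t ht a.2 b.2 hab)
  · -- `Φ 1 '' M = N`
    have h01 : (1 : ℝ) ∈ Icc (0 : ℝ) 1 := ⟨zero_le_one, le_refl 1⟩
    apply Subset.antisymm
    · rintro _ ⟨x, hx, rfl⟩
      obtain ⟨j, hj⟩ := mem_iUnion.mp hx
      have hxK : x ∈ K (j + 1) := interior_subset (hKmono j hj)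
      rw [lemB j x hj 1 h01]
      refine mem_iUnion.mpr ⟨j + 1, ?_⟩
      rw [← h1 (j + 1)]
      exact ⟨x, hxK, rfl⟩
    · intro y hy
      obtain ⟨j, hj⟩ := mem_iUnion.mp hy
      obtain ⟨x, hx, hxy⟩ := h2 j hj
      refine ⟨x, mem_iUnion.mpr ⟨j, hx⟩, ?_⟩
      rw [lemB j x hx 1 h01, hxy]
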